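/- For every integer n with 1 ≤ n ≤ 3, every gross substitutes valuation u on [n] can be written as a merge u = u¹ * u² * ⋯ * u^k of finitely many unit demand valuations on subsets of [n]. -/

import Mathlib

open Finset

variable {α : Type*} [DecidableEq α]

/-- A valuation on ground set `E`: zero at the empty set, non-negative,
and monotone on subsets of `E`. -/
def IsValuation (E : Finset α) (u : Finset α → ℝ) : Prop :=
  u ∅ = 0 ∧ (∀ S : Finset α, S ⊆ E → 0 ≤ u S) ∧
    ∀ ⦃S T : Finset α⦄, S ⊆ T → T ⊆ E → u S ≤ u T

/-- Gross substitutes valuation on ground set `E`: a valuation satisfying the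
M♮-exchange property. -/
def GrossSubstitutes (E : Finset α) (u : Finset α → ℝ) : Prop :=
  IsValuation E u ∧
    ∀ ⦃S T : Finset α⦄, S ⊆ E → T ⊆ E → ∀ i ∈ S \ T,
      u S + u T ≤ u (S.erase i) + u (insert i T) ∨
        ∃ j ∈ T \ S,
          u S + u T ≤ u (insert j (S.erase i)) + u ((insert i T).erase j)

/-- The merge (convolution) of a valuation `u1` on `E1` and `u2` on `E2`:
`(u1 * u2)(S) = max { u1 S1 + u2 S2 : S = S1 ∪ S2, S1 ∩ S2 = ∅, S1 ⊆ E1, S2 ⊆ E2 }`. -/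
noncomputable def mergeVal (E1 E2 : Finset α) (u1 u2 : Finset α → ℝ)
    (S : Finset α) : ℝ :=
  sSup {x : ℝ | ∃ S1 S2 : Finset α, S = S1 ∪ S2 ∧ Disjoint S1 S2 ∧
    S1 ⊆ E1 ∧ S2 ⊆ E2 ∧ x = u1 S1 + u2 S2}

/-- A unit demand valuation on ground set `E`: `u T = max_{i ∈ T} w i` for
nonempty `T ⊆ E`, and `u ∅ = 0`, for some nonnegative weights `w`. -/
def IsUnitDemand (E : Finset α) (u : Finset α → ℝ) : Prop :=
  ∃ w : α → ℝ, (∀ i, 0 ≤ w i) ∧ u ∅ = 0 ∧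
    ∀ T : Finset α, T ⊆ E → ∀ hT : T.Nonempty, u T = T.sup' hT w

/-- The iterated merge of a list of valuations (each paired with its ground
set), returning the resulting ground set and valuation. -/
noncomputable def mergeList :
    List (Finset α × (Finset α → ℝ)) → Finset α × (Finset α → ℝ)
  | [] => (∅, fun _ => 0)
  | p :: L =>
    let q := mergeList L
    (p.1 ∪ q.1, mergeVal p.1 q.1 p.2 q.2)

/-! ### Auxiliary machinery -/

set_option linter.unusedSectionVars false
set_option linter.unusedVariables false

/-- A canonical unit demand valuation built from a weight function. -/
noncomputable def udem (w : α → ℝ) (S : Finset α) : ℝ :=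
  if h : S.Nonempty then S.sup' h w else 0

lemma udem_isUnitDemand (E : Finset α) (w : α → ℝ) (hw : ∀ i, 0 ≤ w i) :
    IsUnitDemand E (udem w) :=
  ⟨w, hw, dif_neg (by simp), fun T _ hT => dif_pos hT⟩

lemma udem_empty (w : α → ℝ) : udem w (∅ : Finset α) = 0 := dif_neg (by simp)

lemma udem_singleton (w : α → ℝ) (i : α) : udem w {i} = w i := by
  simp [udem]

lemma udem_pair (w : α → ℝ) (i j : α) :
    udem w {i, j} = max (w i) (w j) := by
  rw [udem, dif_pos ⟨i, by simp⟩]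
  rw [Finset.sup'_insert, Finset.sup'_singleton]
  exact singleton_nonempty j

lemma udem_triple (w : α → ℝ) (i j k : α) :
    udem w {i, j, k} = max (w i) (max (w j) (w k)) := by
  rw [udem, dif_pos ⟨i, by simp⟩]
  rw [Finset.sup'_insert, Finset.sup'_insert, Finset.sup'_singleton]
  · exact singleton_nonempty k
  · exact insert_nonempty j {k}

lemma mergeVal_eq (E1 E2 : Finset α) (u1 u2 : Finset α → ℝ) (S : Finset α) (v : ℝ)
    (hmem : ∃ S1 S2 : Finset α, S = S1 ∪ S2 ∧ Disjoint S1 S2 ∧ S1 ⊆ E1 ∧ S2 ⊆ E2 ∧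
      v = u1 S1 + u2 S2)
    (hub : ∀ S1 S2 : Finset α, S = S1 ∪ S2 → Disjoint S1 S2 → S1 ⊆ E1 → S2 ⊆ E2 →
      u1 S1 + u2 S2 ≤ v) :
    mergeVal E1 E2 u1 u2 S = v := by
  apply IsGreatest.csSup_eq
  constructor
  · exact hmem
  · rintro x ⟨S1, S2, h1, h2, h3, h4, rfl⟩
    exact hub S1 S2 h1 h2 h3 h4

lemma mergeVal_univ_empty [Fintype α] (u1 u2 : Finset α → ℝ) (S : Finset α) :
    mergeVal Finset.univ ∅ u1 u2 S = u1 S + u2 ∅ := by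
  apply mergeVal_eq
  · exact ⟨S, ∅, by simp, disjoint_empty_right _, subset_univ _, Finset.Subset.refl _, rfl⟩
  · rintro S1 S2 h1 h2 h3 h4
    have : S2 = ∅ := subset_empty.mp h4
    subst this
    rw [union_empty] at h1
    subst h1
    exact le_refl _

lemma mergeVal_univ_eq [Fintype α] (u1 u2 : Finset α → ℝ) (S : Finset α) (v : ℝ)
    (hmem : ∃ S1, S1 ⊆ S ∧ v = u1 S1 + u2 (S \ S1))
    (hub : ∀ S1, S1 ⊆ S → u1 S1 + u2 (S \ S1) ≤ v) :
    mergeVal Finset.univ Finset.univ u1 u2 S = v := by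
  apply mergeVal_eq
  · obtain ⟨S1, h1, h2⟩ := hmem
    exact ⟨S1, S \ S1, (Finset.union_sdiff_of_subset h1).symm, Finset.disjoint_sdiff,
      subset_univ _, subset_univ _, h2⟩
  · rintro S1 S2 h1 h2 - -
    have hS2 : S2 = S \ S1 := by
      subst h1; exact (Finset.union_sdiff_cancel_left h2).symm
    subst hS2
    exact hub S1 (h1 ▸ Finset.subset_union_left)

/-! Evaluation of vector literals. -/

lemma vec2_zero (x y : ℝ) : ![x, y] 0 = x := rfl
lemma vec2_one (x y : ℝ) : ![x, y] 1 = y := rfl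
lemma vec3_zero (x y z : ℝ) : ![x, y, z] 0 = x := rfl
lemma vec3_one (x y z : ℝ) : ![x, y, z] 1 = y := rfl
lemma vec3_two (x y z : ℝ) : ![x, y, z] 2 = z := rfl

/-! Set-difference computations in `Fin 2` and `Fin 3`. -/

lemma sd2_a : ({0, 1} : Finset (Fin 2)) \ {0} = {1} := by decide
lemma sd2_b : ({0, 1} : Finset (Fin 2)) \ {1} = {0} := by decide

lemma sd3_a : ({0, 1} : Finset (Fin 3)) \ {0} = {1} := by decide
lemma sd3_b : ({0, 1} : Finset (Fin 3)) \ {1} = {0} := by decide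
lemma sd3_c : ({0, 2} : Finset (Fin 3)) \ {0} = {2} := by decide
lemma sd3_d : ({0, 2} : Finset (Fin 3)) \ {2} = {0} := by decide
lemma sd3_e : ({1, 2} : Finset (Fin 3)) \ {1} = {2} := by decide
lemma sd3_f : ({1, 2} : Finset (Fin 3)) \ {2} = {1} := by decide
lemma sd3_g : ({0, 1, 2} : Finset (Fin 3)) \ {0} = {1, 2} := by decide
lemma sd3_h : ({0, 1, 2} : Finset (Fin 3)) \ {1} = {0, 2} := by decide
lemma sd3_i : ({0, 1, 2} : Finset (Fin 3)) \ {2} = {0, 1} := by decide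
lemma sd3_j : ({0, 1, 2} : Finset (Fin 3)) \ {0, 1} = {2} := by decide
lemma sd3_k : ({0, 1, 2} : Finset (Fin 3)) \ {0, 2} = {1} := by decide
lemma sd3_l : ({0, 1, 2} : Finset (Fin 3)) \ {1, 2} = {0} := by decide

lemma subsets2 : ∀ X : Finset (Fin 2), X = ∅ ∨ X = {0} ∨ X = {1} ∨ X = {0, 1} := by decide

lemma subsets3 : ∀ X : Finset (Fin 3), X = ∅ ∨ X = {0} ∨ X = {1} ∨ X = {2} ∨
    X = {0, 1} ∨ X = {0, 2} ∨ X = {1, 2} ∨ X = {0, 1, 2} := by decide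

set_option maxHeartbeats 4000000 in
/-- For `1 ≤ n ≤ 3`, every gross substitutes valuation on `[n]` is a merge of
finitely many unit demand valuations on subsets of `[n]`. -/
theorem gs_is_merge_of_unit_demands (n : ℕ) (h1 : 1 ≤ n) (h3 : n ≤ 3)
    (u : Finset (Fin n) → ℝ)
    (hu : GrossSubstitutes (Finset.univ : Finset (Fin n)) u) :
    ∃ L : List (Finset (Fin n) × (Finset (Fin n) → ℝ)),
      L ≠ [] ∧ (∀ p ∈ L, IsUnitDemand p.1 p.2) ∧
      (mergeList L).1 = Finset.univ ∧ u = (mergeList L).2 := by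
  obtain ⟨⟨hu0, hpos, hmono⟩, hex⟩ := hu
  interval_cases n
  · -- n = 1
    refine ⟨[(Finset.univ, udem (fun i => u {i}))], by simp, ?_, by simp [mergeList], ?_⟩
    · rintro p hp
      simp only [List.mem_singleton] at hp
      subst hp
      exact udem_isUnitDemand _ _ (fun i => hpos _ (subset_univ _))
    · funext S
      simp only [mergeList]
      rw [mergeVal_univ_empty]
      rcases (by decide : ∀ X : Finset (Fin 1), X = ∅ ∨ X = {0}) S with rfl | rfl
      · simp [udem_empty, hu0]
      · simp [udem_singleton]
  · -- n = 2
    have na0 : (0:ℝ) ≤ u {0} := hpos _ (subset_univ _)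
    have na1 : (0:ℝ) ≤ u {1} := hpos _ (subset_univ _)
    have m001 : u {0} ≤ u {0, 1} := hmono (by decide) (subset_univ _)
    have m101 : u {1} ≤ u {0, 1} := hmono (by decide) (subset_univ _)
    have s01 : u {0, 1} ≤ u {0} + u {1} := by
      rcases hex (Finset.subset_univ {0, 1}) (Finset.subset_univ ∅) 0 (by decide) with
        h | ⟨j, hj, -⟩
      · rw [show ({0, 1} : Finset (Fin 2)).erase 0 = {1} from by decide,
            show insert (0 : Fin 2) (∅ : Finset (Fin 2)) = {0} from by decide] at h
        linarith [h]
      · rw [show (∅ : Finset (Fin 2)) \ {0, 1} = ∅ from by decide] at hj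
        exact absurd hj (Finset.notMem_empty j)
    set wA : Fin 2 → ℝ := (fun i => u {i}) with hwA
    set wB : Fin 2 → ℝ := ![u {0, 1} - u {1}, u {0, 1} - u {0}] with hwB
    have B0 : wB 0 = u {0, 1} - u {1} := by rw [hwB, vec2_zero]
    have B1 : wB 1 = u {0, 1} - u {0} := by rw [hwB, vec2_one]
    have hz : (mergeVal Finset.univ ∅ (udem wB) fun _ => 0) = udem wB := by
      funext S
      rw [mergeVal_univ_empty]
      simp
    have hI0 : mergeVal Finset.univ Finset.univ (udem wA) (udem wB) {0} = u {0} := by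
      apply mergeVal_univ_eq
      · refine ⟨{0}, by decide, ?_⟩
        simp only [sdiff_self, Finset.bot_eq_empty, udem_singleton, udem_empty, hwA, add_zero]
      · intro S1 hS1
        rcases subsets2 S1 with rfl | rfl | rfl | rfl <;>
          first
            | exact absurd hS1 (by decide)
            | (simp only [sdiff_self, Finset.bot_eq_empty, sdiff_empty, udem_empty, udem_singleton, hwA,
                add_zero, zero_add]
               linarith)
    have hI1 : mergeVal Finset.univ Finset.univ (udem wA) (udem wB) {1} = u {1} := by
      apply mergeVal_univ_eq
      · refine ⟨{1}, by decide, ?_⟩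
        simp only [sdiff_self, Finset.bot_eq_empty, udem_singleton, udem_empty, hwA, add_zero]
      · intro S1 hS1
        rcases subsets2 S1 with rfl | rfl | rfl | rfl <;>
          first
            | exact absurd hS1 (by decide)
            | (simp only [sdiff_self, Finset.bot_eq_empty, sdiff_empty, udem_empty, udem_singleton, hwA,
                add_zero, zero_add]
               linarith)
    have hI01 : mergeVal Finset.univ Finset.univ (udem wA) (udem wB) {0, 1} = u {0, 1} := by
      apply mergeVal_univ_eq
      · refine ⟨{0}, by decide, ?_⟩
        simp only [sd2_a, udem_singleton, hwA]
        linarith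
      · intro S1 hS1
        rcases subsets2 S1 with rfl | rfl | rfl | rfl <;>
          (simp only [sd2_a, sd2_b, sdiff_self, Finset.bot_eq_empty, sdiff_empty, udem_empty,
            udem_singleton, udem_pair, hwA, add_zero, zero_add, max_le_iff,
            ← max_add_add_left, ← max_add_add_right]
           repeat' apply And.intro
           all_goals linarith)
    refine ⟨[(Finset.univ, udem wA), (Finset.univ, udem wB)], by simp, ?_,
      by simp [mergeList], ?_⟩
    · rintro p hp
      simp only [List.mem_cons, List.mem_singleton, List.not_mem_nil] at hp
      rcases hp with rfl | rfl | hp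
      · exact udem_isUnitDemand _ _ (fun i => by
          simp only [hwA]; exact hpos _ (subset_univ _))
      · refine udem_isUnitDemand _ _ (fun i => ?_)
        fin_cases i
        · rw [show wB ⟨0, by omega⟩ = wB 0 from rfl, B0]; linarith
        · rw [show wB ⟨1, by omega⟩ = wB 1 from rfl, B1]; linarith
      · cases hp
    · simp only [mergeList, union_empty, union_self]
      rw [hz]
      funext S
      rcases subsets2 S with rfl | rfl | rfl | rfl
      · rw [show (mergeVal Finset.univ Finset.univ (udem wA) (udem wB) ∅ : ℝ) = 0 from ?_]
        · exact hu0
        · apply mergeVal_univ_eq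
          · exact ⟨∅, by decide, by simp [udem_empty]⟩
          · intro S1 hS1
            have : S1 = ∅ := subset_empty.mp hS1
            subst this
            simp [udem_empty]
      · exact hI0.symm
      · exact hI1.symm
      · exact hI01.symm
  · -- n = 3
    -- singleton nonnegativity
    have na0 : (0:ℝ) ≤ u {0} := hpos _ (subset_univ _)
    have na1 : (0:ℝ) ≤ u {1} := hpos _ (subset_univ _)
    have na2 : (0:ℝ) ≤ u {2} := hpos _ (subset_univ _)
    -- monotonicity
    have m001 : u {0} ≤ u {0, 1} := hmono (by decide) (subset_univ _)
    have m101 : u {1} ≤ u {0, 1} := hmono (by decide) (subset_univ _)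
    have m002 : u {0} ≤ u {0, 2} := hmono (by decide) (subset_univ _)
    have m202 : u {2} ≤ u {0, 2} := hmono (by decide) (subset_univ _)
    have m112 : u {1} ≤ u {1, 2} := hmono (by decide) (subset_univ _)
    have m212 : u {2} ≤ u {1, 2} := hmono (by decide) (subset_univ _)
    have mp01 : u {0, 1} ≤ u {0, 1, 2} := hmono (by decide) (subset_univ _)
    have mp02 : u {0, 2} ≤ u {0, 1, 2} := hmono (by decide) (subset_univ _)
    have mp12 : u {1, 2} ≤ u {0, 1, 2} := hmono (by decide) (subset_univ _)
    -- submodularity on pairs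
    have s01 : u {0, 1} ≤ u {0} + u {1} := by
      rcases hex (Finset.subset_univ {0, 1}) (Finset.subset_univ ∅) 0 (by decide) with
        h | ⟨j, hj, -⟩
      · rw [show ({0, 1} : Finset (Fin 3)).erase 0 = {1} from by decide,
            show insert (0 : Fin 3) (∅ : Finset (Fin 3)) = {0} from by decide] at h
        linarith [h]
      · rw [show (∅ : Finset (Fin 3)) \ {0, 1} = ∅ from by decide] at hj
        exact absurd hj (Finset.notMem_empty j)
    have s02 : u {0, 2} ≤ u {0} + u {2} := by
      rcases hex (Finset.subset_univ {0, 2}) (Finset.subset_univ ∅) 0 (by decide) with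
        h | ⟨j, hj, -⟩
      · rw [show ({0, 2} : Finset (Fin 3)).erase 0 = {2} from by decide,
            show insert (0 : Fin 3) (∅ : Finset (Fin 3)) = {0} from by decide] at h
        linarith [h]
      · rw [show (∅ : Finset (Fin 3)) \ {0, 2} = ∅ from by decide] at hj
        exact absurd hj (Finset.notMem_empty j)
    have s12 : u {1, 2} ≤ u {1} + u {2} := by
      rcases hex (Finset.subset_univ {1, 2}) (Finset.subset_univ ∅) 1 (by decide) with
        h | ⟨j, hj, -⟩
      · rw [show ({1, 2} : Finset (Fin 3)).erase 1 = {2} from by decide,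
            show insert (1 : Fin 3) (∅ : Finset (Fin 3)) = {1} from by decide] at h
        linarith [h]
      · rw [show (∅ : Finset (Fin 3)) \ {1, 2} = ∅ from by decide] at hj
        exact absurd hj (Finset.notMem_empty j)
    -- submodularity: full set vs singleton
    have F0 : u {0, 1, 2} + u {0} ≤ u {0, 1} + u {0, 2} := by
      rcases hex (Finset.subset_univ {0, 1, 2}) (Finset.subset_univ {0}) 1 (by decide) with
        h | ⟨j, hj, -⟩
      · rw [show ({0, 1, 2} : Finset (Fin 3)).erase 1 = {0, 2} from by decide,
            show insert (1 : Fin 3) ({0} : Finset (Fin 3)) = {0, 1} from by decide] at h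
        linarith [h]
      · rw [show ({0} : Finset (Fin 3)) \ {0, 1, 2} = ∅ from by decide] at hj
        exact absurd hj (Finset.notMem_empty j)
    have F1 : u {0, 1, 2} + u {1} ≤ u {0, 1} + u {1, 2} := by
      rcases hex (Finset.subset_univ {0, 1, 2}) (Finset.subset_univ {1}) 0 (by decide) with
        h | ⟨j, hj, -⟩
      · rw [show ({0, 1, 2} : Finset (Fin 3)).erase 0 = {1, 2} from by decide,
            show insert (0 : Fin 3) ({1} : Finset (Fin 3)) = {0, 1} from by decide] at h
        linarith [h]
      · rw [show ({1} : Finset (Fin 3)) \ {0, 1, 2} = ∅ from by decide] at hj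
        exact absurd hj (Finset.notMem_empty j)
    have F2 : u {0, 1, 2} + u {2} ≤ u {0, 2} + u {1, 2} := by
      rcases hex (Finset.subset_univ {0, 1, 2}) (Finset.subset_univ {2}) 0 (by decide) with
        h | ⟨j, hj, -⟩
      · rw [show ({0, 1, 2} : Finset (Fin 3)).erase 0 = {1, 2} from by decide,
            show insert (0 : Fin 3) ({2} : Finset (Fin 3)) = {0, 2} from by decide] at h
        linarith [h]
      · rw [show ({2} : Finset (Fin 3)) \ {0, 1, 2} = ∅ from by decide] at hj
        exact absurd hj (Finset.notMem_empty j)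
    -- gross-substitutes triple conditions
    have t01 : u {0, 1} + u {2} ≤ u {1} + u {0, 2} ∨ u {0, 1} + u {2} ≤ u {0} + u {1, 2} := by
      rcases hex (Finset.subset_univ {0, 1}) (Finset.subset_univ {2}) 0 (by decide) with
        h | ⟨j, hj, h⟩
      · left
        rw [show ({0, 1} : Finset (Fin 3)).erase 0 = {1} from by decide,
            show insert (0 : Fin 3) ({2} : Finset (Fin 3)) = {0, 2} from by decide] at h
        exact h
      · right
        simp only [Finset.mem_sdiff, Finset.mem_singleton] at hj
        obtain ⟨rfl, -⟩ := hj
        rw [show insert (2 : Fin 3) (({0, 1} : Finset (Fin 3)).erase 0) = {1, 2} from by decide,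
            show (insert (0 : Fin 3) ({2} : Finset (Fin 3))).erase 2 = {0} from by decide] at h
        linarith [h]
    have t02 : u {0, 2} + u {1} ≤ u {2} + u {0, 1} ∨ u {0, 2} + u {1} ≤ u {0} + u {1, 2} := by
      rcases hex (Finset.subset_univ {0, 2}) (Finset.subset_univ {1}) 0 (by decide) with
        h | ⟨j, hj, h⟩
      · left
        rw [show ({0, 2} : Finset (Fin 3)).erase 0 = {2} from by decide,
            show insert (0 : Fin 3) ({1} : Finset (Fin 3)) = {0, 1} from by decide] at h
        exact h
      · right
        simp only [Finset.mem_sdiff, Finset.mem_singleton] at hj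
        obtain ⟨rfl, -⟩ := hj
        rw [show insert (1 : Fin 3) (({0, 2} : Finset (Fin 3)).erase 0) = {1, 2} from by decide,
            show (insert (0 : Fin 3) ({1} : Finset (Fin 3))).erase 1 = {0} from by decide] at h
        linarith [h]
    have t12 : u {1, 2} + u {0} ≤ u {2} + u {0, 1} ∨ u {1, 2} + u {0} ≤ u {1} + u {0, 2} := by
      rcases hex (Finset.subset_univ {1, 2}) (Finset.subset_univ {0}) 1 (by decide) with
        h | ⟨j, hj, h⟩
      · left
        rw [show ({1, 2} : Finset (Fin 3)).erase 1 = {2} from by decide,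
            show insert (1 : Fin 3) ({0} : Finset (Fin 3)) = {0, 1} from by decide] at h
        exact h
      · right
        simp only [Finset.mem_sdiff, Finset.mem_singleton] at hj
        obtain ⟨rfl, -⟩ := hj
        rw [show insert (0 : Fin 3) (({1, 2} : Finset (Fin 3)).erase 1) = {0, 2} from by decide,
            show (insert (1 : Fin 3) ({0} : Finset (Fin 3))).erase 0 = {1} from by decide] at h
        linarith [h]
    -- the three unit demand weight vectors
    set wA : Fin 3 → ℝ := (fun i => u {i}) with hwA
    set wB : Fin 3 → ℝ :=
      ![min (u {0, 1} - u {1}) (u {0, 2} - u {2}),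
        min (u {0, 1} - u {0}) (u {1, 2} - u {2}),
        min (u {0, 2} - u {0}) (u {1, 2} - u {1})] with hwB
    set wC : Fin 3 → ℝ :=
      ![u {0, 1, 2} - u {1, 2}, u {0, 1, 2} - u {0, 2}, u {0, 1, 2} - u {0, 1}] with hwC
    -- facts about the weights
    have B0l : wB 0 ≤ u {0, 1} - u {1} := by rw [hwB, vec3_zero]; exact min_le_left _ _
    have B0r : wB 0 ≤ u {0, 2} - u {2} := by rw [hwB, vec3_zero]; exact min_le_right _ _
    have B0n : (0:ℝ) ≤ wB 0 := by
      rw [hwB, vec3_zero]; exact le_min (by linarith) (by linarith)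
    have B1l : wB 1 ≤ u {0, 1} - u {0} := by rw [hwB, vec3_one]; exact min_le_left _ _
    have B1r : wB 1 ≤ u {1, 2} - u {2} := by rw [hwB, vec3_one]; exact min_le_right _ _
    have B1n : (0:ℝ) ≤ wB 1 := by
      rw [hwB, vec3_one]; exact le_min (by linarith) (by linarith)
    have B2l : wB 2 ≤ u {0, 2} - u {0} := by rw [hwB, vec3_two]; exact min_le_left _ _
    have B2r : wB 2 ≤ u {1, 2} - u {1} := by rw [hwB, vec3_two]; exact min_le_right _ _
    have B2n : (0:ℝ) ≤ wB 2 := by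
      rw [hwB, vec3_two]; exact le_min (by linarith) (by linarith)
    have C0 : wC 0 = u {0, 1, 2} - u {1, 2} := by rw [hwC, vec3_zero]
    have C1 : wC 1 = u {0, 1, 2} - u {0, 2} := by rw [hwC, vec3_one]
    have C2 : wC 2 = u {0, 1, 2} - u {0, 1} := by rw [hwC, vec3_two]
    have C0m : wC 0 ≤ wB 0 := by
      rw [hwB, hwC, vec3_zero]; exact le_min (by linarith) (by linarith)
    have C1m : wC 1 ≤ wB 1 := by
      rw [hwB, hwC, vec3_one]; exact le_min (by linarith) (by linarith)
    have C2m : wC 2 ≤ wB 2 := by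
      rw [hwB, hwC, vec3_two]; exact le_min (by linarith) (by linarith)
    -- for each pair, one of the two natural assignments is optimal
    have W01 : wB 0 = u {0, 1} - u {1} ∨ wB 1 = u {0, 1} - u {0} := by
      rcases t01 with h | h
      · left; rw [hwB, vec3_zero]; exact min_eq_left (by linarith)
      · right; rw [hwB, vec3_one]; exact min_eq_left (by linarith)
    have W02 : wB 0 = u {0, 2} - u {2} ∨ wB 2 = u {0, 2} - u {0} := by
      rcases t02 with h | h
      · left; rw [hwB, vec3_zero]; exact min_eq_right (by linarith)
      · right; rw [hwB, vec3_two]; exact min_eq_left (by linarith)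
    have W12 : wB 1 = u {1, 2} - u {2} ∨ wB 2 = u {1, 2} - u {1} := by
      rcases t12 with h | h
      · left; rw [hwB, vec3_one]; exact min_eq_right (by linarith)
      · right; rw [hwB, vec3_two]; exact min_eq_right (by linarith)
    -- abbreviations for inner merge values
    -- max-bound facts
    have MV01l : wB 0 + wC 1 ≤ max (wB 0 + wC 1) (wB 1 + wC 0) := le_max_left _ _
    have MV01r : wB 1 + wC 0 ≤ max (wB 0 + wC 1) (wB 1 + wC 0) := le_max_right _ _
    have MV02l : wB 0 + wC 2 ≤ max (wB 0 + wC 2) (wB 2 + wC 0) := le_max_left _ _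
    have MV02r : wB 2 + wC 0 ≤ max (wB 0 + wC 2) (wB 2 + wC 0) := le_max_right _ _
    have MV12l : wB 1 + wC 2 ≤ max (wB 1 + wC 2) (wB 2 + wC 1) := le_max_left _ _
    have MV12r : wB 2 + wC 1 ≤ max (wB 1 + wC 2) (wB 2 + wC 1) := le_max_right _ _
    have MT01 : wB 0 + wC 1 ≤
        max (max (max (wB 0 + wC 1) (wB 0 + wC 2)) (max (wB 1 + wC 0) (wB 1 + wC 2)))
          (max (wB 2 + wC 0) (wB 2 + wC 1)) :=
      (le_max_left _ _).trans ((le_max_left _ _).trans (le_max_left _ _))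
    have MT02 : wB 0 + wC 2 ≤
        max (max (max (wB 0 + wC 1) (wB 0 + wC 2)) (max (wB 1 + wC 0) (wB 1 + wC 2)))
          (max (wB 2 + wC 0) (wB 2 + wC 1)) :=
      (le_max_right _ _).trans ((le_max_left _ _).trans (le_max_left _ _))
    have MT10 : wB 1 + wC 0 ≤
        max (max (max (wB 0 + wC 1) (wB 0 + wC 2)) (max (wB 1 + wC 0) (wB 1 + wC 2)))
          (max (wB 2 + wC 0) (wB 2 + wC 1)) :=
      (le_max_left _ _).trans ((le_max_right _ _).trans (le_max_left _ _))
    have MT12 : wB 1 + wC 2 ≤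
        max (max (max (wB 0 + wC 1) (wB 0 + wC 2)) (max (wB 1 + wC 0) (wB 1 + wC 2)))
          (max (wB 2 + wC 0) (wB 2 + wC 1)) :=
      (le_max_right _ _).trans ((le_max_right _ _).trans (le_max_left _ _))
    have MT20 : wB 2 + wC 0 ≤
        max (max (max (wB 0 + wC 1) (wB 0 + wC 2)) (max (wB 1 + wC 0) (wB 1 + wC 2)))
          (max (wB 2 + wC 0) (wB 2 + wC 1)) :=
      (le_max_left _ _).trans (le_max_right _ _)
    have MT21 : wB 2 + wC 1 ≤
        max (max (max (wB 0 + wC 1) (wB 0 + wC 2)) (max (wB 1 + wC 0) (wB 1 + wC 2)))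
          (max (wB 2 + wC 0) (wB 2 + wC 1)) :=
      (le_max_right _ _).trans (le_max_right _ _)
    -- zero-merge collapses
    have hz : (mergeVal Finset.univ ∅ (udem wC) fun _ => 0) = udem wC := by
      funext S
      rw [mergeVal_univ_empty]
      simp
    -- inner merge of the unit demand valuations B and C
    have hIe : mergeVal Finset.univ Finset.univ (udem wB) (udem wC) ∅ = 0 := by
      apply mergeVal_univ_eq
      · exact ⟨∅, by decide, by simp [udem_empty]⟩
      · intro S1 hS1
        have : S1 = ∅ := subset_empty.mp hS1
        subst this
        simp [udem_empty]
    have hI0 : mergeVal Finset.univ Finset.univ (udem wB) (udem wC) {0} = wB 0 := by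
      apply mergeVal_univ_eq
      · refine ⟨{0}, by decide, ?_⟩
        simp only [sdiff_self, Finset.bot_eq_empty, udem_singleton, udem_empty, add_zero]
      · intro S1 hS1
        rcases subsets3 S1 with rfl | rfl | rfl | rfl | rfl | rfl | rfl | rfl <;>
          first
            | exact absurd hS1 (by decide)
            | (simp only [sdiff_self, Finset.bot_eq_empty, sdiff_empty, udem_empty,
                udem_singleton, add_zero, zero_add]
               linarith)
    have hI1 : mergeVal Finset.univ Finset.univ (udem wB) (udem wC) {1} = wB 1 := by
      apply mergeVal_univ_eq
      · refine ⟨{1}, by decide, ?_⟩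
        simp only [sdiff_self, Finset.bot_eq_empty, udem_singleton, udem_empty, add_zero]
      · intro S1 hS1
        rcases subsets3 S1 with rfl | rfl | rfl | rfl | rfl | rfl | rfl | rfl <;>
          first
            | exact absurd hS1 (by decide)
            | (simp only [sdiff_self, Finset.bot_eq_empty, sdiff_empty, udem_empty,
                udem_singleton, add_zero, zero_add]
               linarith)
    have hI2 : mergeVal Finset.univ Finset.univ (udem wB) (udem wC) {2} = wB 2 := by
      apply mergeVal_univ_eq
      · refine ⟨{2}, by decide, ?_⟩
        simp only [sdiff_self, Finset.bot_eq_empty, udem_singleton, udem_empty, add_zero]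
      · intro S1 hS1
        rcases subsets3 S1 with rfl | rfl | rfl | rfl | rfl | rfl | rfl | rfl <;>
          first
            | exact absurd hS1 (by decide)
            | (simp only [sdiff_self, Finset.bot_eq_empty, sdiff_empty, udem_empty,
                udem_singleton, add_zero, zero_add]
               linarith)
    have hI01 : mergeVal Finset.univ Finset.univ (udem wB) (udem wC) {0, 1} =
        max (wB 0 + wC 1) (wB 1 + wC 0) := by
      apply mergeVal_univ_eq
      · rcases le_total (wB 0 + wC 1) (wB 1 + wC 0) with h | h
        · refine ⟨{1}, by decide, ?_⟩
          simp only [sd3_b, udem_singleton]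
          exact max_eq_right h
        · refine ⟨{0}, by decide, ?_⟩
          simp only [sd3_a, udem_singleton]
          exact max_eq_left h
      · intro S1 hS1
        rcases subsets3 S1 with rfl | rfl | rfl | rfl | rfl | rfl | rfl | rfl <;>
          first
            | exact absurd hS1 (by decide)
            | (simp only [sd3_a, sd3_b, sdiff_self, Finset.bot_eq_empty, sdiff_empty,
                udem_empty, udem_singleton, udem_pair, add_zero, zero_add, max_le_iff,
                ← max_add_add_left, ← max_add_add_right]
               repeat' apply And.intro
               all_goals linarith)
    have hI02 : mergeVal Finset.univ Finset.univ (udem wB) (udem wC) {0, 2} =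
        max (wB 0 + wC 2) (wB 2 + wC 0) := by
      apply mergeVal_univ_eq
      · rcases le_total (wB 0 + wC 2) (wB 2 + wC 0) with h | h
        · refine ⟨{2}, by decide, ?_⟩
          simp only [sd3_d, udem_singleton]
          exact max_eq_right h
        · refine ⟨{0}, by decide, ?_⟩
          simp only [sd3_c, udem_singleton]
          exact max_eq_left h
      · intro S1 hS1
        rcases subsets3 S1 with rfl | rfl | rfl | rfl | rfl | rfl | rfl | rfl <;>
          first
            | exact absurd hS1 (by decide)
            | (simp only [sd3_c, sd3_d, sdiff_self, Finset.bot_eq_empty, sdiff_empty,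
                udem_empty, udem_singleton, udem_pair, add_zero, zero_add, max_le_iff,
                ← max_add_add_left, ← max_add_add_right]
               repeat' apply And.intro
               all_goals linarith)
    have hI12 : mergeVal Finset.univ Finset.univ (udem wB) (udem wC) {1, 2} =
        max (wB 1 + wC 2) (wB 2 + wC 1) := by
      apply mergeVal_univ_eq
      · rcases le_total (wB 1 + wC 2) (wB 2 + wC 1) with h | h
        · refine ⟨{2}, by decide, ?_⟩
          simp only [sd3_f, udem_singleton]
          exact max_eq_right h
        · refine ⟨{1}, by decide, ?_⟩
          simp only [sd3_e, udem_singleton]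
          exact max_eq_left h
      · intro S1 hS1
        rcases subsets3 S1 with rfl | rfl | rfl | rfl | rfl | rfl | rfl | rfl <;>
          first
            | exact absurd hS1 (by decide)
            | (simp only [sd3_e, sd3_f, sdiff_self, Finset.bot_eq_empty, sdiff_empty,
                udem_empty, udem_singleton, udem_pair, add_zero, zero_add, max_le_iff,
                ← max_add_add_left, ← max_add_add_right]
               repeat' apply And.intro
               all_goals linarith)
    have hIu : mergeVal Finset.univ Finset.univ (udem wB) (udem wC) {0, 1, 2} =
        max (max (max (wB 0 + wC 1) (wB 0 + wC 2)) (max (wB 1 + wC 0) (wB 1 + wC 2)))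
          (max (wB 2 + wC 0) (wB 2 + wC 1)) := by
      apply mergeVal_univ_eq
      · rcases le_total
            (max (max (wB 0 + wC 1) (wB 0 + wC 2)) (max (wB 1 + wC 0) (wB 1 + wC 2)))
            (max (wB 2 + wC 0) (wB 2 + wC 1)) with h | h
        · refine ⟨{2}, by decide, ?_⟩
          simp only [sd3_i, udem_singleton, udem_pair]
          rw [max_eq_right h]
          exact max_add_add_left _ _ _
        · rcases le_total (max (wB 0 + wC 1) (wB 0 + wC 2)) (max (wB 1 + wC 0) (wB 1 + wC 2))
              with h2 | h2
          · refine ⟨{1}, by decide, ?_⟩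
            simp only [sd3_h, udem_singleton, udem_pair]
            rw [max_eq_left h, max_eq_right h2]
            exact max_add_add_left _ _ _
          · refine ⟨{0}, by decide, ?_⟩
            simp only [sd3_g, udem_singleton, udem_pair]
            rw [max_eq_left h, max_eq_left h2]
            exact max_add_add_left _ _ _
      · intro S1 hS1
        rcases subsets3 S1 with rfl | rfl | rfl | rfl | rfl | rfl | rfl | rfl <;>
          (simp only [sd3_g, sd3_h, sd3_i, sd3_j, sd3_k, sd3_l, sdiff_self,
            Finset.bot_eq_empty, sdiff_empty, udem_empty, udem_singleton, udem_pair,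
            udem_triple, add_zero, zero_add, max_le_iff, ← max_add_add_left,
            ← max_add_add_right]
           repeat' apply And.intro
           all_goals linarith)
    -- outer merge computations
    have hOe : mergeVal Finset.univ Finset.univ (udem wA)
        (mergeVal Finset.univ Finset.univ (udem wB) (udem wC)) ∅ = u ∅ := by
      apply mergeVal_univ_eq
      · exact ⟨∅, by decide, by simp [udem_empty, hIe, hu0]⟩
      · intro S1 hS1
        have : S1 = ∅ := subset_empty.mp hS1
        subst this
        simp [udem_empty, hIe, hu0]
    have hO0 : mergeVal Finset.univ Finset.univ (udem wA)
        (mergeVal Finset.univ Finset.univ (udem wB) (udem wC)) {0} = u {0} := by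
      apply mergeVal_univ_eq
      · refine ⟨{0}, by decide, ?_⟩
        simp only [sdiff_self, Finset.bot_eq_empty, udem_singleton, hIe, hwA, add_zero]
      · intro S1 hS1
        rcases subsets3 S1 with rfl | rfl | rfl | rfl | rfl | rfl | rfl | rfl <;>
          first
            | exact absurd hS1 (by decide)
            | (simp only [sdiff_self, Finset.bot_eq_empty, sdiff_empty, hIe, hI0,
                udem_empty, udem_singleton, hwA, add_zero, zero_add]
               linarith)
    have hO1 : mergeVal Finset.univ Finset.univ (udem wA)
        (mergeVal Finset.univ Finset.univ (udem wB) (udem wC)) {1} = u {1} := by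
      apply mergeVal_univ_eq
      · refine ⟨{1}, by decide, ?_⟩
        simp only [sdiff_self, Finset.bot_eq_empty, udem_singleton, hIe, hwA, add_zero]
      · intro S1 hS1
        rcases subsets3 S1 with rfl | rfl | rfl | rfl | rfl | rfl | rfl | rfl <;>
          first
            | exact absurd hS1 (by decide)
            | (simp only [sdiff_self, Finset.bot_eq_empty, sdiff_empty, hIe, hI1,
                udem_empty, udem_singleton, hwA, add_zero, zero_add]
               linarith)
    have hO2 : mergeVal Finset.univ Finset.univ (udem wA)
        (mergeVal Finset.univ Finset.univ (udem wB) (udem wC)) {2} = u {2} := by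
      apply mergeVal_univ_eq
      · refine ⟨{2}, by decide, ?_⟩
        simp only [sdiff_self, Finset.bot_eq_empty, udem_singleton, hIe, hwA, add_zero]
      · intro S1 hS1
        rcases subsets3 S1 with rfl | rfl | rfl | rfl | rfl | rfl | rfl | rfl <;>
          first
            | exact absurd hS1 (by decide)
            | (simp only [sdiff_self, Finset.bot_eq_empty, sdiff_empty, hIe, hI2,
                udem_empty, udem_singleton, hwA, add_zero, zero_add]
               linarith)
    have hO01 : mergeVal Finset.univ Finset.univ (udem wA)
        (mergeVal Finset.univ Finset.univ (udem wB) (udem wC)) {0, 1} = u {0, 1} := by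
      apply mergeVal_univ_eq
      · rcases W01 with h | h
        · refine ⟨{1}, by decide, ?_⟩
          simp only [sd3_b, udem_singleton, hI0, hwA]
          linarith
        · refine ⟨{0}, by decide, ?_⟩
          simp only [sd3_a, udem_singleton, hI1, hwA]
          linarith
      · intro S1 hS1
        rcases subsets3 S1 with rfl | rfl | rfl | rfl | rfl | rfl | rfl | rfl <;>
          first
            | exact absurd hS1 (by decide)
            | (simp only [sd3_a, sd3_b, sdiff_self, Finset.bot_eq_empty, sdiff_empty,
                hIe, hI0, hI1, hI01, udem_empty, udem_singleton, udem_pair, hwA,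
                add_zero, zero_add, max_le_iff, ← max_add_add_left, ← max_add_add_right]
               repeat' apply And.intro
               all_goals linarith)
    have hO02 : mergeVal Finset.univ Finset.univ (udem wA)
        (mergeVal Finset.univ Finset.univ (udem wB) (udem wC)) {0, 2} = u {0, 2} := by
      apply mergeVal_univ_eq
      · rcases W02 with h | h
        · refine ⟨{2}, by decide, ?_⟩
          simp only [sd3_d, udem_singleton, hI0, hwA]
          linarith
        · refine ⟨{0}, by decide, ?_⟩
          simp only [sd3_c, udem_singleton, hI2, hwA]
          linarith
      · intro S1 hS1
        rcases subsets3 S1 with rfl | rfl | rfl | rfl | rfl | rfl | rfl | rfl <;>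
          first
            | exact absurd hS1 (by decide)
            | (simp only [sd3_c, sd3_d, sdiff_self, Finset.bot_eq_empty, sdiff_empty,
                hIe, hI0, hI2, hI02, udem_empty, udem_singleton, udem_pair, hwA,
                add_zero, zero_add, max_le_iff, ← max_add_add_left, ← max_add_add_right]
               repeat' apply And.intro
               all_goals linarith)
    have hO12 : mergeVal Finset.univ Finset.univ (udem wA)
        (mergeVal Finset.univ Finset.univ (udem wB) (udem wC)) {1, 2} = u {1, 2} := by
      apply mergeVal_univ_eq
      · rcases W12 with h | h
        · refine ⟨{2}, by decide, ?_⟩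
          simp only [sd3_f, udem_singleton, hI1, hwA]
          linarith
        · refine ⟨{1}, by decide, ?_⟩
          simp only [sd3_e, udem_singleton, hI2, hwA]
          linarith
      · intro S1 hS1
        rcases subsets3 S1 with rfl | rfl | rfl | rfl | rfl | rfl | rfl | rfl <;>
          first
            | exact absurd hS1 (by decide)
            | (simp only [sd3_e, sd3_f, sdiff_self, Finset.bot_eq_empty, sdiff_empty,
                hIe, hI1, hI2, hI12, udem_empty, udem_singleton, udem_pair, hwA,
                add_zero, zero_add, max_le_iff, ← max_add_add_left, ← max_add_add_right]
               repeat' apply And.intro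
               all_goals linarith)
    have hOu : mergeVal Finset.univ Finset.univ (udem wA)
        (mergeVal Finset.univ Finset.univ (udem wB) (udem wC)) {0, 1, 2} = u {0, 1, 2} := by
      apply mergeVal_univ_eq
      · rcases W01 with h | h
        · refine ⟨{1}, by decide, ?_⟩
          simp only [sd3_h, udem_singleton, hI02, hwA]
          have hm : max (wB 0 + wC 2) (wB 2 + wC 0) = wB 0 + wC 2 :=
            max_eq_left (by linarith)
          rw [hm]
          linarith
        · refine ⟨{0}, by decide, ?_⟩
          simp only [sd3_g, udem_singleton, hI12, hwA]
          have hm : max (wB 1 + wC 2) (wB 2 + wC 1) = wB 1 + wC 2 :=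
            max_eq_left (by linarith)
          rw [hm]
          linarith
      · intro S1 hS1
        rcases subsets3 S1 with rfl | rfl | rfl | rfl | rfl | rfl | rfl | rfl <;>
          (simp only [sd3_g, sd3_h, sd3_i, sd3_j, sd3_k, sd3_l, sdiff_self,
            Finset.bot_eq_empty, sdiff_empty, hIe, hI0, hI1, hI2, hI01, hI02, hI12, hIu,
            udem_empty, udem_singleton, udem_pair, udem_triple, hwA, add_zero, zero_add,
            max_le_iff, ← max_add_add_left, ← max_add_add_right]
           repeat' apply And.intro
           all_goals linarith)
    -- assemble
    refine ⟨[(Finset.univ, udem wA), (Finset.univ, udem wB), (Finset.univ, udem wC)],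
      by simp, ?_, by simp [mergeList], ?_⟩
    · rintro p hp
      simp only [List.mem_cons, List.mem_singleton, List.not_mem_nil] at hp
      rcases hp with rfl | rfl | rfl | hp
      · exact udem_isUnitDemand _ _ (fun i => by
          simp only [hwA]; exact hpos _ (subset_univ _))
      · refine udem_isUnitDemand _ _ (fun i => ?_)
        fin_cases i
        · exact B0n
        · exact B1n
        · exact B2n
      · refine udem_isUnitDemand _ _ (fun i => ?_)
        fin_cases i
        · rw [show wC ⟨0, by omega⟩ = wC 0 from rfl, C0]; linarith
        · rw [show wC ⟨1, by omega⟩ = wC 1 from rfl, C1]; linarith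
        · rw [show wC ⟨2, by omega⟩ = wC 2 from rfl, C2]; linarith
      · cases hp
    · simp only [mergeList, union_empty, union_self]
      rw [hz]
      funext S
      rcases subsets3 S with rfl | rfl | rfl | rfl | rfl | rfl | rfl | rfl
      · exact hOe.symm
      · exact hO0.symm
      · exact hO1.symm
      · exact hO2.symm
      · exact hO01.symm
      · exact hO02.symm
      · exact hO12.symm
      · exact hOu.symm
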